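/- Let P and Q be probability measures on a space X with finite Rényi divergence D_α(P‖Q) for some α > 1, and let E be an event with P(E) > 0 and Q(E) > 0. Then D_α(P|_E ‖ Q|_E) ≤ (1/P(E)) · D_α(P‖Q), where P|_E denotes conditioning on E. -/

import Mathlib

open Finset

/-- Rényi divergence of order `α` between two discrete distributions on a finite type. -/
noncomputable def renyiDiv {X : Type*} [Fintype X] (α : ℝ) (P Q : X → ℝ) : ℝ :=
  (α - 1)⁻¹ * Real.log (∑ x, (P x) ^ α / (Q x) ^ (α - 1))

/-- Conditioning a discrete distribution on an event `E`. -/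
noncomputable def condOn {X : Type*} [Fintype X] [DecidableEq X]
    (P : X → ℝ) (E : Finset X) : X → ℝ :=
  fun x => if x ∈ E then P x / ∑ y ∈ E, P y else 0


lemma jensen_aux {X : Type*} [Fintype X] [DecidableEq X] {α : ℝ} (hα : 1 < α)
    (s : Finset X) (f g : X → ℝ) (hf : ∀ x ∈ s, 0 ≤ f x) (hg : ∀ x ∈ s, 0 ≤ g x)
    (hac : ∀ x ∈ s, g x = 0 → f x = 0) (hb : 0 < ∑ x ∈ s, g x) :
    (∑ x ∈ s, f x) ^ α / (∑ x ∈ s, g x) ^ (α - 1) ≤ ∑ x ∈ s, f x ^ α / g x ^ (α - 1) := by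
  classical
  set a := ∑ x ∈ s, f x with ha
  set b := ∑ x ∈ s, g x with hbdef
  have ha0 : 0 ≤ a := Finset.sum_nonneg hf
  set s' := s.filter (fun x => g x ≠ 0) with hs'
  have hs'sub : ∀ x ∈ s', x ∈ s := fun x hx => (Finset.mem_filter.1 hx).1
  have hgpos : ∀ x ∈ s', 0 < g x := fun x hx =>
    lt_of_le_of_ne (hg x (hs'sub x hx)) (Ne.symm (Finset.mem_filter.1 hx).2)
  have hsumf : ∑ x ∈ s', f x = a :=
    Finset.sum_filter_of_ne (fun x hx hfx => fun hg0 => hfx (hac x hx hg0))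
  have hsumg : ∑ x ∈ s', g x = b := Finset.sum_filter_of_ne (fun x _ h => h)
  have key := Real.rpow_arith_mean_le_arith_mean_rpow s' (fun x => g x / b) (fun x => f x / g x)
    (fun x hx => div_nonneg (hg x (hs'sub x hx)) hb.le)
    (by rw [← Finset.sum_div, hsumg, div_self hb.ne'])
    (fun x hx => div_nonneg (hf x (hs'sub x hx)) (hg x (hs'sub x hx))) hα.le
  have h1 : ∑ x ∈ s', g x / b * (f x / g x) = a / b := by
    rw [← hsumf, Finset.sum_div]
    refine Finset.sum_congr rfl fun x hx => ?_
    have := (hgpos x hx).ne'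
    field_simp
  have h2 : ∀ x ∈ s', g x / b * (f x / g x) ^ α = f x ^ α / g x ^ (α - 1) / b := by
    intro x hx
    have hgx := hgpos x hx
    rw [Real.div_rpow (hf x (hs'sub x hx)) hgx.le, Real.rpow_sub hgx, Real.rpow_one]
    have h3 : (g x : ℝ) ^ α ≠ 0 := (Real.rpow_pos_of_pos hgx α).ne'
    field_simp
  rw [h1, Finset.sum_congr rfl h2, ← Finset.sum_div] at key
  have hsum3 : ∑ x ∈ s', f x ^ α / g x ^ (α - 1) = ∑ x ∈ s, f x ^ α / g x ^ (α - 1) := by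
    refine Finset.sum_filter_of_ne fun x hx hne => fun hg0 => hne ?_
    rw [hg0, hac x hx hg0, Real.zero_rpow (by positivity : α ≠ 0)]
    simp
  rw [hsum3] at key
  rw [Real.div_rpow ha0 hb.le] at key
  have hbα : (0:ℝ) < b ^ α := Real.rpow_pos_of_pos hb α
  have hmul : a ^ α / b ^ α * b ≤ (∑ x ∈ s, f x ^ α / g x ^ (α - 1)) / b * b :=
    mul_le_mul_of_nonneg_right key hb.le
  rw [div_mul_cancel₀ _ hb.ne'] at hmul
  calc a ^ α / b ^ (α - 1) = a ^ α / b ^ α * b := by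
        rw [Real.rpow_sub hb, Real.rpow_one]; field_simp
    _ ≤ _ := hmul

lemma gibbs_aux {p q : ℝ} (hp0 : 0 < p) (hp1 : p < 1) (hq0 : 0 < q) (hq1 : q < 1) :
    q ^ p * (1 - q) ^ (1 - p) ≤ p ^ p * (1 - p) ^ (1 - p) := by
  have hp1' : (0:ℝ) < 1 - p := by linarith
  have hq1' : (0:ℝ) < 1 - q := by linarith
  have h := Real.geom_mean_le_arith_mean2_weighted hp0.le hp1'.le
    (div_nonneg hq0.le hp0.le) (div_nonneg hq1'.le hp1'.le) (by ring)
  have hsum : p * (q / p) + (1 - p) * ((1 - q) / (1 - p)) = 1 := by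
    field_simp
    ring
  rw [hsum] at h
  have hid : q ^ p * (1 - q) ^ (1 - p)
      = ((q / p) ^ p * ((1 - q) / (1 - p)) ^ (1 - p)) * (p ^ p * (1 - p) ^ (1 - p)) := by
    rw [Real.div_rpow hq0.le hp0.le, Real.div_rpow hq1'.le hp1'.le]
    have h1 : (p:ℝ) ^ p ≠ 0 := (Real.rpow_pos_of_pos hp0 p).ne'
    have h2 : ((1:ℝ) - p) ^ (1 - p) ≠ 0 := (Real.rpow_pos_of_pos hp1' (1-p)).ne'
    field_simp
  rw [hid]
  have hpos : (0:ℝ) ≤ p ^ p * (1 - p) ^ (1 - p) := by positivity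
  nlinarith [mul_le_mul_of_nonneg_right h hpos]

theorem renyiDiv_cond_le' {X : Type*} [Fintype X] [DecidableEq X]
    (α : ℝ) (hα : 1 < α) (P Q : X → ℝ)
    (hP : ∀ x, 0 ≤ P x) (hQ : ∀ x, 0 ≤ Q x)
    (hP1 : ∑ x, P x = 1) (hQ1 : ∑ x, Q x = 1)
    (hac : ∀ x, Q x = 0 → P x = 0)
    (E : Finset X) (hPE : 0 < ∑ x ∈ E, P x) (hQE : 0 < ∑ x ∈ E, Q x) :
    (α - 1)⁻¹ * Real.log (∑ x, (if x ∈ E then P x / ∑ y ∈ E, P y else 0) ^ α /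
        (if x ∈ E then Q x / ∑ y ∈ E, Q y else 0) ^ (α - 1))
      ≤ (∑ x ∈ E, P x)⁻¹ * ((α - 1)⁻¹ * Real.log (∑ x, P x ^ α / Q x ^ (α - 1))) := by
  classical
  set p := ∑ x ∈ E, P x with hpdef
  set q := ∑ x ∈ E, Q x with hqdef
  have hα0 : (0:ℝ) < α := by linarith
  have hα1 : (0:ℝ) < α - 1 := by linarith
  have hα1ne : α - 1 ≠ 0 := hα1.ne'
  have hαne : α ≠ 0 := hα0.ne'
  set S := ∑ x, P x ^ α / Q x ^ (α - 1) with hSdef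
  set SE := ∑ x ∈ E, P x ^ α / Q x ^ (α - 1) with hSEdef
  have hterm : ∀ x, 0 ≤ P x ^ α / Q x ^ (α - 1) := fun x =>
    div_nonneg (Real.rpow_nonneg (hP x) _) (Real.rpow_nonneg (hQ x) _)
  -- the conditional sum equals (q^(α-1)/p^α) * SE
  set c := q ^ (α - 1) / p ^ α with hcdef
  have hcpos : 0 < c := div_pos (Real.rpow_pos_of_pos hQE _) (Real.rpow_pos_of_pos hPE _)
  have hsplit : (∑ x, (if x ∈ E then P x / p else 0) ^ α /
      (if x ∈ E then Q x / q else 0) ^ (α - 1)) = c * SE := by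
    rw [hSEdef, Finset.mul_sum,
      ← Finset.sum_subset (Finset.subset_univ E) (fun x _ hx => by
        simp only [if_neg hx]
        rw [Real.zero_rpow hαne]
        simp)]
    refine Finset.sum_congr rfl fun x hx => ?_
    rw [if_pos hx, if_pos hx, Real.div_rpow (hP x) hPE.le, Real.div_rpow (hQ x) hQE.le]
    simp only [div_eq_mul_inv, mul_inv, inv_inv]
    ring
  rw [hsplit]
  -- Jensen on E : SE ≥ p^α / q^(α-1)
  have hJE : p ^ α / q ^ (α - 1) ≤ SE :=
    jensen_aux hα E P Q (fun x _ => hP x) (fun x _ => hQ x) (fun x _ h => hac x h) hQE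
  have hABpos : 0 < p ^ α / q ^ (α - 1) :=
    div_pos (Real.rpow_pos_of_pos hPE _) (Real.rpow_pos_of_pos hQE _)
  have hSEpos : 0 < SE := lt_of_lt_of_le hABpos hJE
  set T := c * SE with hTdef
  have hTpos : 0 < T := mul_pos hcpos hSEpos
  have hcA : c * (p ^ α / q ^ (α - 1)) = 1 := by
    rw [hcdef]
    have h1 : (p:ℝ) ^ α ≠ 0 := (Real.rpow_pos_of_pos hPE α).ne'
    have h2 : (q:ℝ) ^ (α - 1) ≠ 0 := (Real.rpow_pos_of_pos hQE _).ne'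
    field_simp
  have hT1 : 1 ≤ T := by
    rw [← hcA]
    exact mul_le_mul_of_nonneg_left hJE hcpos.le
  have hSE_le_S : SE ≤ S := by
    rw [hSdef, hSEdef]
    exact Finset.sum_le_sum_of_subset_of_nonneg (Finset.subset_univ E)
      (fun x _ _ => hterm x)
  have hp1 : p ≤ 1 := by
    rw [hpdef, ← hP1]
    exact Finset.sum_le_sum_of_subset_of_nonneg (Finset.subset_univ E) (fun x _ _ => hP x)
  have hq1 : q ≤ 1 := by
    rw [hqdef, ← hQ1]
    exact Finset.sum_le_sum_of_subset_of_nonneg (Finset.subset_univ E) (fun x _ _ => hQ x)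
  -- reduce the goal to : p * log T ≤ log S
  suffices hkey : p * Real.log T ≤ Real.log S by
    have : Real.log T ≤ p⁻¹ * Real.log S := by
      rw [inv_mul_eq_div, le_div_iff₀ hPE]
      linarith [hkey]
    calc (α - 1)⁻¹ * Real.log T ≤ (α - 1)⁻¹ * (p⁻¹ * Real.log S) :=
          mul_le_mul_of_nonneg_left this (by positivity)
      _ = p⁻¹ * ((α - 1)⁻¹ * Real.log S) := by ring
  -- complements
  have hcomplP : p + ∑ x ∈ Eᶜ, P x = 1 := by
    rw [hpdef, Finset.sum_add_sum_compl, hP1]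
  have hcomplQ : q + ∑ x ∈ Eᶜ, Q x = 1 := by
    rw [hqdef, Finset.sum_add_sum_compl, hQ1]
  by_cases hpe1 : p = 1
  -- case p = 1
  · have hc1 : c ≤ 1 := by
      rw [hcdef, hpe1, Real.one_rpow, div_one]
      exact Real.rpow_le_one hQE.le hq1 hα1.le
    have hTS : T ≤ S := by
      calc T = c * SE := hTdef
        _ ≤ 1 * SE := mul_le_mul_of_nonneg_right hc1 hSEpos.le
        _ = SE := one_mul _
        _ ≤ S := hSE_le_S
    rw [hpe1, one_mul]
    exact Real.log_le_log hTpos hTS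
  -- case p < 1
  · have hplt : p < 1 := lt_of_le_of_ne hp1 hpe1
    have hpc : (0:ℝ) < 1 - p := by linarith
    have hqlt : q < 1 := by
      rcases lt_or_eq_of_le hq1 with h | h
      · exact h
      · exfalso
        have hQc : ∑ x ∈ Eᶜ, Q x = 0 := by linarith [hcomplQ, h]
        have hQzero : ∀ x ∈ Eᶜ, Q x = 0 :=
          (Finset.sum_eq_zero_iff_of_nonneg (fun x _ => hQ x)).1 hQc
        have hPc : ∑ x ∈ Eᶜ, P x = 0 :=
          Finset.sum_eq_zero fun x hx => hac x (hQzero x hx)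
        have : p = 1 := by linarith [hcomplP]
        exact hpe1 this
    have hqc : (0:ℝ) < 1 - q := by linarith
    have hPc : ∑ x ∈ Eᶜ, P x = 1 - p := by linarith [hcomplP]
    have hQc : ∑ x ∈ Eᶜ, Q x = 1 - q := by linarith [hcomplQ]
    -- Jensen on Eᶜ
    have hJEc : (1 - p) ^ α / (1 - q) ^ (α - 1) ≤ ∑ x ∈ Eᶜ, P x ^ α / Q x ^ (α - 1) := by
      have := jensen_aux hα Eᶜ P Q (fun x _ => hP x) (fun x _ => hQ x)
        (fun x _ h => hac x h) (by rw [hQc]; exact hqc)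
      rwa [hPc, hQc] at this
    set A := p ^ α / q ^ (α - 1) with hAdef
    set B := (1 - p) ^ α / (1 - q) ^ (α - 1) with hBdef
    have hBpos : 0 < B := div_pos (Real.rpow_pos_of_pos hpc _) (Real.rpow_pos_of_pos hqc _)
    have hAT : A * T = SE := by
      rw [hTdef, ← mul_assoc, mul_comm A c, hcA, one_mul]
    -- S ≥ A*T + B
    have hS_ge : A * T + B ≤ S := by
      have : SE + ∑ x ∈ Eᶜ, P x ^ α / Q x ^ (α - 1) = S := by
        rw [hSdef, hSEdef, Finset.sum_add_sum_compl]
      rw [hAT]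
      linarith [hJEc, this]
    -- weighted AM-GM
    have hgm := Real.geom_mean_le_arith_mean2_weighted hPE.le hpc.le
      (by positivity : (0:ℝ) ≤ A * T / p) (by positivity : (0:ℝ) ≤ B / (1 - p)) (by ring)
    have hgm2 : (A * T / p) ^ p * (B / (1 - p)) ^ (1 - p) ≤ A * T + B := by
      have heq : p * (A * T / p) + (1 - p) * (B / (1 - p)) = A * T + B := by
        field_simp
      linarith [hgm, heq.ge, heq.le]
    -- key claim : (A/p)^p * (B/(1-p))^(1-p) ≥ 1
    have hApq : A / p = (p / q) ^ (α - 1) := by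
      rw [hAdef, Real.div_rpow hPE.le hQE.le, Real.rpow_sub hPE, Real.rpow_one]
      ring
    have hBpq : B / (1 - p) = ((1 - p) / (1 - q)) ^ (α - 1) := by
      rw [hBdef, Real.div_rpow hpc.le hqc.le, Real.rpow_sub hpc, Real.rpow_one]
      ring
    have hpq0 : (0:ℝ) ≤ p / q := by positivity
    have hpqc0 : (0:ℝ) ≤ (1 - p) / (1 - q) := by positivity
    have hKrw : (A / p) ^ p * (B / (1 - p)) ^ (1 - p)
        = ((p / q) ^ p * ((1 - p) / (1 - q)) ^ (1 - p)) ^ (α - 1) := by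
      rw [hApq, hBpq, ← Real.rpow_mul hpq0, ← Real.rpow_mul hpqc0,
        mul_comm (α - 1) p, mul_comm (α - 1) (1 - p),
        Real.rpow_mul hpq0, Real.rpow_mul hpqc0,
        ← Real.mul_rpow (Real.rpow_nonneg hpq0 _) (Real.rpow_nonneg hpqc0 _)]
    have hbase : 1 ≤ (p / q) ^ p * ((1 - p) / (1 - q)) ^ (1 - p) := by
      rw [Real.div_rpow hPE.le hQE.le, Real.div_rpow hpc.le hqc.le,
        div_mul_div_comm, le_div_iff₀ (by positivity), one_mul]
      exact gibbs_aux hPE hplt hQE hqlt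
    have hK : 1 ≤ (A / p) ^ p * (B / (1 - p)) ^ (1 - p) := by
      rw [hKrw]
      exact Real.one_le_rpow hbase hα1.le
    have hTp : T ^ p ≤ A * T + B := by
      have hATp : T * (A / p) = A * T / p := by ring
      have h1 : T ^ p * ((A / p) ^ p * (B / (1 - p)) ^ (1 - p))
          = (A * T / p) ^ p * (B / (1 - p)) ^ (1 - p) := by
        rw [← mul_assoc, ← Real.mul_rpow hTpos.le (by positivity : (0:ℝ) ≤ A / p), hATp]
      calc T ^ p = T ^ p * 1 := (mul_one _).symm
        _ ≤ T ^ p * ((A / p) ^ p * (B / (1 - p)) ^ (1 - p)) :=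
            mul_le_mul_of_nonneg_left hK (Real.rpow_nonneg hTpos.le p)
        _ = (A * T / p) ^ p * (B / (1 - p)) ^ (1 - p) := h1
        _ ≤ A * T + B := hgm2
    have hlog : Real.log (T ^ p) ≤ Real.log S :=
      Real.log_le_log (Real.rpow_pos_of_pos hTpos p) (le_trans hTp hS_ge)
    rwa [Real.log_rpow hTpos] at hlog

/-- Rényi divergence under conditioning:
`D_α(P|_E ‖ Q|_E) ≤ (1 / P(E)) · D_α(P ‖ Q)`. -/
theorem renyiDiv_cond_le {X : Type*} [Fintype X] [DecidableEq X]
    (α : ℝ) (hα : 1 < α) (P Q : X → ℝ)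
    (hP : ∀ x, 0 ≤ P x) (hQ : ∀ x, 0 ≤ Q x)
    (hP1 : ∑ x, P x = 1) (hQ1 : ∑ x, Q x = 1)
    (hac : ∀ x, Q x = 0 → P x = 0)
    (E : Finset X) (hPE : 0 < ∑ x ∈ E, P x) (hQE : 0 < ∑ x ∈ E, Q x) :
    renyiDiv α (condOn P E) (condOn Q E) ≤ (∑ x ∈ E, P x)⁻¹ * renyiDiv α P Q := by
  have h := renyiDiv_cond_le' α hα P Q hP hQ hP1 hQ1 hac E hPE hQE
  simpa [renyiDiv, condOn] using h
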